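/- The map 𝒮 satisfies the twisted bicomodule conditions: (s ⊗ 𝒮) ∘ Δ = DL ∘ 𝒮 and (𝒮 ⊗ t) ∘ Δ = DR ∘ 𝒮 as maps H1 → H⊗H1 and H1 → H1⊗H respectively. (Part of Theorem 2.6.) -/

import Mathlib

open TensorProduct Coalgebra

noncomputable section

namespace ConvAux

variable {R C B : Type*} [CommSemiring R]
  [AddCommMonoid C] [Module R C] [Coalgebra R C]
  [Semiring B] [Algebra R B]

/-- Convolution product on `Hom(C, B)`. -/
def conv (f g : C →ₗ[R] B) : C →ₗ[R] B :=
  LinearMap.mul' R B ∘ₗ map f g ∘ₗ (Coalgebra.comul : C →ₗ[R] C ⊗[R] C)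

/-- Convolution unit. -/
def convOne : C →ₗ[R] B := Algebra.linearMap R B ∘ₗ (Coalgebra.counit : C →ₗ[R] R)

lemma convOne_apply (a : C) : (convOne : C →ₗ[R] B) a = (counit (R := R) a) • (1 : B) := by
  simp [convOne, Algebra.smul_def]

lemma conv_apply (f g : C →ₗ[R] B) {a : C} {ι : Type*} (r : Coalgebra.Repr R a ι) :
    conv f g a = ∑ i ∈ r.index, f (r.left i) * g (r.right i) := by
  simp [conv, ← r.eq, map_sum]

lemma conv_assoc (f g h : C →ₗ[R] B) : conv (conv f g) h = conv f (conv g h) := by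
  ext a
  set r := Coalgebra.Repr.arbitrary R a
  set a₁ : (i : C × C) → Coalgebra.Repr R (r.left i) (C × C) := fun i => Coalgebra.Repr.arbitrary R _
  set a₂ : (i : C × C) → Coalgebra.Repr R (r.right i) (C × C) := fun i => Coalgebra.Repr.arbitrary R _
  have key := sum_tmul_tmul_eq r a₁ a₂
  have key2 := congrArg (TensorProduct.map f (TensorProduct.map g h)) key
  have key3 := congrArg (LinearMap.mul' R B ∘ₗ LinearMap.lTensor B (LinearMap.mul' R B)) key2
  simp only [map_sum, TensorProduct.map_tmul, LinearMap.comp_apply,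
    LinearMap.lTensor_tmul, LinearMap.mul'_apply] at key3
  rw [conv_apply (conv f g) h r, conv_apply f (conv g h) r]
  calc ∑ i ∈ r.index, conv f g (r.left i) * h (r.right i)
      = ∑ i ∈ r.index, ∑ j ∈ (a₁ i).index,
          f ((a₁ i).left j) * (g ((a₁ i).right j) * h (r.right i)) := by
        refine Finset.sum_congr rfl fun i _ => ?_
        rw [conv_apply f g (a₁ i), Finset.sum_mul]
        exact Finset.sum_congr rfl fun j _ => (mul_assoc _ _ _)
    _ = ∑ i ∈ r.index, ∑ j ∈ (a₂ i).index,
          f (r.left i) * (g ((a₂ i).left j) * h ((a₂ i).right j)) := key3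
    _ = ∑ i ∈ r.index, f (r.left i) * conv g h (r.right i) := by
        refine Finset.sum_congr rfl fun i _ => ?_
        rw [conv_apply g h (a₂ i), Finset.mul_sum]

lemma sum_counit_smul {a : C} {ι : Type*} (r : Coalgebra.Repr R a ι) {M : Type*} [AddCommMonoid M]
    [Module R M] (G : C →ₗ[R] M) :
    ∑ i ∈ r.index, (counit (R := R) (r.left i)) • G (r.right i) = G a := by
  have h1 := congrArg ((TensorProduct.lid R M).toLinearMap ∘ₗ
    TensorProduct.map LinearMap.id G) (sum_counit_tmul_eq r)
  simp only [map_sum, LinearMap.comp_apply, TensorProduct.map_tmul, LinearMap.id_coe,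
    id_eq, LinearEquiv.coe_coe, TensorProduct.lid_tmul, one_smul] at h1
  exact h1

lemma sum_smul_counit {a : C} {ι : Type*} (r : Coalgebra.Repr R a ι) {M : Type*} [AddCommMonoid M]
    [Module R M] (G : C →ₗ[R] M) :
    ∑ i ∈ r.index, (counit (R := R) (r.right i)) • G (r.left i) = G a := by
  have h1 := congrArg ((TensorProduct.rid R M).toLinearMap ∘ₗ
    TensorProduct.map G LinearMap.id) (sum_tmul_counit_eq r)
  simp only [map_sum, LinearMap.comp_apply, TensorProduct.map_tmul, LinearMap.id_coe,
    id_eq, LinearEquiv.coe_coe, TensorProduct.rid_tmul, one_smul] at h1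
  exact h1

lemma conv_one_left (f : C →ₗ[R] B) : conv convOne f = f := by
  ext a
  rw [conv_apply convOne f (Coalgebra.Repr.arbitrary R a)]
  calc ∑ i ∈ _, convOne ((ℛ R a).left i) * f ((ℛ R a).right i)
      = ∑ i ∈ (ℛ R a).index, (counit (R := R) ((ℛ R a).left i)) • f ((ℛ R a).right i) := by
        refine Finset.sum_congr rfl fun i _ => ?_
        rw [convOne_apply, smul_mul_assoc, one_mul]
    _ = f a := sum_counit_smul _ f

lemma conv_one_right (f : C →ₗ[R] B) : conv f convOne = f := by
  ext a
  rw [conv_apply f convOne (Coalgebra.Repr.arbitrary R a)]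
  calc ∑ i ∈ _, f ((ℛ R a).left i) * convOne ((ℛ R a).right i)
      = ∑ i ∈ (ℛ R a).index, (counit (R := R) ((ℛ R a).right i)) • f ((ℛ R a).left i) := by
        refine Finset.sum_congr rfl fun i _ => ?_
        rw [convOne_apply, mul_smul_comm, mul_one]
    _ = f a := sum_smul_counit _ f

lemma conv_inv_unique {f g h : C →ₗ[R] B} (hgf : conv g f = convOne)
    (hfh : conv f h = convOne) : g = h := by
  have : conv g (conv f h) = conv (conv g f) h := (conv_assoc g f h).symm
  rw [hgf, hfh, conv_one_right, conv_one_left] at this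
  exact this

end ConvAux

namespace ConvAux

open HopfAlgebra

section Hopf

variable {R C D : Type*} [CommSemiring R] [Semiring C] [HopfAlgebra R C]
  [Semiring D] [HopfAlgebra R D]

lemma counit_antipode (a : C) :
    counit (R := R) (antipode (R := R) (a : C)) = counit (R := R) a := by
  set r := Coalgebra.Repr.arbitrary R a
  have h1 := sum_smul_counit r ((Coalgebra.counit : C →ₗ[R] R) ∘ₗ (antipode (R := R)))
  simp only [LinearMap.comp_apply] at h1
  have h2 : ∑ i ∈ r.index,
      (counit (R := R) (r.right i)) • counit (R := R) (antipode (R := R) (r.left i))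
      = ∑ i ∈ r.index, counit (R := R) (antipode (R := R) (r.left i) * r.right i) := by
    refine Finset.sum_congr rfl fun i _ => ?_
    simp [Bialgebra.counit_mul, smul_eq_mul, mul_comm]
  have h3 : ∑ i ∈ r.index, counit (R := R) (antipode (R := R) (r.left i) * r.right i)
      = counit (R := R) ((counit (R := R) a) • (1 : C)) := by
    rw [← map_sum, sum_antipode_mul_eq_smul r]
  rw [← h1, h2, h3, map_smul, Bialgebra.counit_one, smul_eq_mul, mul_one]

variable (R C) in
/-- `x ↦ x ⊗ₜ 1`. -/
def iota₁ : C →ₗ[R] C ⊗[R] C := (TensorProduct.mk R C C).flip 1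

variable (R C) in
/-- `x ↦ 1 ⊗ₜ x`. -/
def iota₂ : C →ₗ[R] C ⊗[R] C := TensorProduct.mk R C C 1

lemma comul_eq_conv :
    (Coalgebra.comul : C →ₗ[R] C ⊗[R] C) = conv (iota₁ R C) (iota₂ R C) := by
  ext a
  rw [conv_apply _ _ (Coalgebra.Repr.arbitrary R a)]
  simp only [iota₁, iota₂, LinearMap.flip_apply, TensorProduct.mk_apply,
    Algebra.TensorProduct.tmul_mul_tmul, mul_one, one_mul]
  exact (Coalgebra.Repr.arbitrary R a).eq.symm

lemma antimap_eq_conv :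
    (TensorProduct.map (antipode (R := R)) (antipode (R := R)) ∘ₗ
      (TensorProduct.comm R C C).toLinearMap ∘ₗ (Coalgebra.comul : C →ₗ[R] C ⊗[R] C))
    = conv (iota₂ R C ∘ₗ antipode (R := R)) (iota₁ R C ∘ₗ antipode (R := R)) := by
  ext a
  rw [conv_apply _ _ (Coalgebra.Repr.arbitrary R a)]
  rw [LinearMap.comp_apply, LinearMap.comp_apply, ← (Coalgebra.Repr.arbitrary R a).eq]
  simp [iota₁, iota₂, Algebra.TensorProduct.tmul_mul_tmul, map_sum]

lemma conv_iota₁_antipode : conv (iota₁ R C ∘ₗ antipode (R := R)) (iota₁ R C) = convOne := by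
  ext a
  rw [conv_apply _ _ (Coalgebra.Repr.arbitrary R a), convOne_apply]
  simp only [iota₁, LinearMap.comp_apply, LinearMap.flip_apply, TensorProduct.mk_apply,
    Algebra.TensorProduct.tmul_mul_tmul, mul_one]
  rw [← TensorProduct.sum_tmul, sum_antipode_mul_eq_smul (Coalgebra.Repr.arbitrary R a),
    Algebra.TensorProduct.one_def, TensorProduct.smul_tmul']

lemma conv_iota₂_antipode : conv (iota₂ R C ∘ₗ antipode (R := R)) (iota₂ R C) = convOne := by
  ext a
  rw [conv_apply _ _ (Coalgebra.Repr.arbitrary R a), convOne_apply]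
  simp only [iota₂, LinearMap.comp_apply, TensorProduct.mk_apply,
    Algebra.TensorProduct.tmul_mul_tmul, mul_one]
  rw [← TensorProduct.tmul_sum, sum_antipode_mul_eq_smul (Coalgebra.Repr.arbitrary R a),
    Algebra.TensorProduct.one_def, TensorProduct.tmul_smul]

lemma conv_comul_comul_antipode :
    conv (Coalgebra.comul : C →ₗ[R] C ⊗[R] C)
      ((Coalgebra.comul : C →ₗ[R] C ⊗[R] C) ∘ₗ antipode (R := R)) = convOne := by
  ext a
  rw [conv_apply _ _ (Coalgebra.Repr.arbitrary R a), convOne_apply]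
  have : ∀ i ∈ (Coalgebra.Repr.arbitrary R a).index,
      comul (R := R) ((Coalgebra.Repr.arbitrary R a).left i) *
        ((Coalgebra.comul : C →ₗ[R] C ⊗[R] C) ∘ₗ antipode (R := R))
          ((Coalgebra.Repr.arbitrary R a).right i)
      = comul (R := R) ((Coalgebra.Repr.arbitrary R a).left i *
          antipode (R := R) ((Coalgebra.Repr.arbitrary R a).right i)) := by
    intro i _
    simp [Bialgebra.comul_mul]
  rw [Finset.sum_congr rfl this, ← map_sum,
    sum_mul_antipode_eq_smul (Coalgebra.Repr.arbitrary R a), map_smul, Bialgebra.comul_one]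

/-- Anticomultiplicativity of the antipode. -/
lemma comul_antipode :
    (Coalgebra.comul : C →ₗ[R] C ⊗[R] C) ∘ₗ antipode (R := R)
    = TensorProduct.map (antipode (R := R)) (antipode (R := R)) ∘ₗ
      (TensorProduct.comm R C C).toLinearMap ∘ₗ (Coalgebra.comul : C →ₗ[R] C ⊗[R] C) := by
  refine (conv_inv_unique (f := (Coalgebra.comul : C →ₗ[R] C ⊗[R] C)) ?_
    conv_comul_comul_antipode).symm
  rw [antimap_eq_conv, comul_eq_conv (R := R) (C := C), conv_assoc,
    ← conv_assoc (iota₁ R C ∘ₗ antipode (R := R)), conv_iota₁_antipode, conv_one_left,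
    conv_iota₂_antipode]

lemma comul_antipode_apply (a : C) :
    comul (R := R) (antipode (R := R) a)
    = TensorProduct.map (antipode (R := R)) (antipode (R := R))
        ((TensorProduct.comm R C C) (comul (R := R) a)) := by
  have := LinearMap.congr_fun (comul_antipode (R := R) (C := C)) a
  simpa using this

section dmap

variable {d : C →ₗ[R] D}
  (hmul : ∀ a b : C, d (a * b) = d a * d b) (hone : d 1 = 1)
  (hcomul : (Coalgebra.comul : D →ₗ[R] D ⊗[R] D) ∘ₗ d
      = TensorProduct.map d d ∘ₗ (Coalgebra.comul : C →ₗ[R] C ⊗[R] C))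
  (hcounit : (Coalgebra.counit : D →ₗ[R] R) ∘ₗ d = (Coalgebra.counit : C →ₗ[R] R))

/-- A representation of `d a` obtained by mapping a representation of `a`. -/
def dRepr (a : C) {ι : Type*} (r : Coalgebra.Repr R a ι) : Coalgebra.Repr R (d a) ι :=
  ⟨r.index, fun i => d (r.left i), fun i => d (r.right i), by
    have h1 := congrArg (fun f => f a) hcomul
    simp only [LinearMap.comp_apply] at h1
    rw [← r.eq, map_sum] at h1
    simpa using h1.symm⟩

include hmul hone in
lemma conv_dS_d : conv (d ∘ₗ antipode (R := R)) d = convOne := by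
  ext a
  rw [conv_apply _ _ (Coalgebra.Repr.arbitrary R a), convOne_apply]
  have : ∀ i ∈ (Coalgebra.Repr.arbitrary R a).index,
      (d ∘ₗ antipode (R := R)) ((Coalgebra.Repr.arbitrary R a).left i) *
        d ((Coalgebra.Repr.arbitrary R a).right i)
      = d (antipode (R := R) ((Coalgebra.Repr.arbitrary R a).left i) *
          (Coalgebra.Repr.arbitrary R a).right i) := by
    intro i _; rw [LinearMap.comp_apply, hmul]
  rw [Finset.sum_congr rfl this, ← map_sum,
    sum_antipode_mul_eq_smul (Coalgebra.Repr.arbitrary R a), map_smul, hone]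

include hcomul hcounit in
lemma conv_d_Sd : conv d (antipode (R := R) ∘ₗ d) = convOne := by
  ext a
  rw [conv_apply _ _ (Coalgebra.Repr.arbitrary R a), convOne_apply]
  have := sum_mul_antipode_eq_smul (dRepr hcomul a (Coalgebra.Repr.arbitrary R a))
  simp only [dRepr] at this
  rw [show ∀ (x : R) (y : D), x • y = x • y from fun _ _ => rfl] at this
  simp only [LinearMap.comp_apply]
  rw [this]
  have h2 := congrArg (fun f => f a) hcounit
  simp only [LinearMap.comp_apply] at h2
  rw [h2]

include hmul hone hcomul hcounit in
/-- A bialgebra map between Hopf algebras commutes with the antipodes. -/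
lemma map_antipode : d ∘ₗ antipode (R := R) = antipode (R := R) ∘ₗ d :=
  conv_inv_unique (conv_dS_d hmul hone) (conv_d_Sd hcomul hcounit)

end dmap

end Hopf

end ConvAux

noncomputable section


variable (k A H : Type*) [Field k] [Ring A] [Ring H]
  [HopfAlgebra k A] [HopfAlgebra k H]

/-- `t(a⊗h) = d(a)h`. -/
def tmap (d : A →ₗ[k] H) : A ⊗[k] H →ₗ[k] H :=
  LinearMap.mul' k H ∘ₗ map d LinearMap.id

/-- `s(a⊗h) = ε(a)h`. -/
def smap : A ⊗[k] H →ₗ[k] H :=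
  (TensorProduct.lid k H).toLinearMap ∘ₗ map (Coalgebra.counit : A →ₗ[k] k) LinearMap.id

/-- `i(h) = 1⊗h`. -/
def imap : H →ₗ[k] A ⊗[k] H := TensorProduct.mk k A H 1

/-- The tensor-product coproduct `Δ(a⊗h) = (a₁⊗h₁) ⊗ (a₂⊗h₂)` on `H1 = A ⊗ H`. -/
def comul1 : A ⊗[k] H →ₗ[k] (A ⊗[k] H) ⊗[k] (A ⊗[k] H) :=
  (tensorTensorTensorComm k A A H H).toLinearMap ∘ₗ
    map (Coalgebra.comul : A →ₗ[k] A ⊗[k] A) (Coalgebra.comul : H →ₗ[k] H ⊗[k] H)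

/-- The tensor-product counit `ε(a⊗h) = ε(a)ε(h)` on `H1 = A ⊗ H`. -/
def counit1 : A ⊗[k] H →ₗ[k] k :=
  (TensorProduct.lid k k).toLinearMap ∘ₗ
    map (Coalgebra.counit : A →ₗ[k] k) (Coalgebra.counit : H →ₗ[k] k)

/-- The left coaction `DL = (t⊗id)Δ`. -/
def DLmap (d : A →ₗ[k] H) : A ⊗[k] H →ₗ[k] H ⊗[k] (A ⊗[k] H) :=
  map (tmap k A H d) LinearMap.id ∘ₗ comul1 k A H

/-- The right coaction `DR = (id⊗s)Δ`. -/
def DRmap : A ⊗[k] H →ₗ[k] (A ⊗[k] H) ⊗[k] H :=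
  map LinearMap.id (smap k A H) ∘ₗ comul1 k A H

/-- The second product `(a⊗h)∘(b⊗g) = ε(h) ab ⊗ g`. -/
def circ : (A ⊗[k] H) ⊗[k] (A ⊗[k] H) →ₗ[k] A ⊗[k] H :=
  map (LinearMap.mul' k A)
      ((TensorProduct.lid k H).toLinearMap ∘ₗ map (Coalgebra.counit : H →ₗ[k] k) LinearMap.id)
    ∘ₗ (tensorTensorTensorComm k A H A H).toLinearMap

/-- The quantum groupoid antipode `𝒮(a⊗h) = S(a₁) ⊗ d(a₂)h`. -/
def SS (d : A →ₗ[k] H) : A ⊗[k] H →ₗ[k] A ⊗[k] H :=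
  map (HopfAlgebra.antipode (R := k) : A →ₗ[k] A) (tmap k A H d)
    ∘ₗ (TensorProduct.assoc k A A H).toLinearMap
    ∘ₗ map (Coalgebra.comul : A →ₗ[k] A ⊗[k] A) LinearMap.id

/-- The smash product multiplication `(a⊗h)(b⊗g) = a(h₁▷b) ⊗ h₂g`. -/
def smashMul (act : H ⊗[k] A →ₗ[k] A) :
    (A ⊗[k] H) ⊗[k] (A ⊗[k] H) →ₗ[k] A ⊗[k] H :=
  map (LinearMap.mul' k A) LinearMap.id
  ∘ₗ (TensorProduct.assoc k A A H).symm.toLinearMap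
  ∘ₗ map LinearMap.id
      (map act (LinearMap.mul' k H)
        ∘ₗ (tensorTensorTensorComm k H H A H).toLinearMap)
  ∘ₗ (TensorProduct.assoc k A (H ⊗[k] H) (A ⊗[k] H)).toLinearMap
  ∘ₗ map (map LinearMap.id (Coalgebra.comul : H →ₗ[k] H ⊗[k] H)) LinearMap.id

/-- The cotensor product `H1□H1`. -/
def cot (d : A →ₗ[k] H) : Set ((A ⊗[k] H) ⊗[k] (A ⊗[k] H)) :=
  {x | (TensorProduct.assoc k (A ⊗[k] H) H (A ⊗[k] H)).toLinearMap
        (map (DRmap k A H) LinearMap.id x) = map LinearMap.id (DLmap k A H d) x}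

/-- A Hopf (algebra) crossed module. -/
structure HopfCrossedModule (act : H ⊗[k] A →ₗ[k] A) (d : A →ₗ[k] H) : Prop where
  /-- `(hg)▷a = h▷(g▷a)` -/
  act_mul : ∀ (h g : H) (a : A), act ((h * g) ⊗ₜ[k] a) = act (h ⊗ₜ[k] act (g ⊗ₜ[k] a))
  /-- `1▷a = a` -/
  act_one : ∀ a : A, act ((1 : H) ⊗ₜ[k] a) = a
  /-- `h▷(ab) = (h₁▷a)(h₂▷b)` -/
  act_mul_alg : act ∘ₗ map LinearMap.id (LinearMap.mul' k A)
      = LinearMap.mul' k A ∘ₗ map act act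
          ∘ₗ (tensorTensorTensorComm k H H A A).toLinearMap
          ∘ₗ map (Coalgebra.comul : H →ₗ[k] H ⊗[k] H) LinearMap.id
  /-- `h▷1 = ε(h)1` -/
  act_unit : ∀ h : H, act (h ⊗ₜ[k] (1 : A)) = (Coalgebra.counit h : k) • (1 : A)
  /-- `Δ(h▷a) = (h₁▷a₁)⊗(h₂▷a₂)` -/
  act_comul : (Coalgebra.comul : A →ₗ[k] A ⊗[k] A) ∘ₗ act
      = map act act ∘ₗ (tensorTensorTensorComm k H H A A).toLinearMap
          ∘ₗ map (Coalgebra.comul : H →ₗ[k] H ⊗[k] H) (Coalgebra.comul : A →ₗ[k] A ⊗[k] A)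
  /-- `ε(h▷a) = ε(h)ε(a)` -/
  act_counit : ∀ (h : H) (a : A),
      (Coalgebra.counit (act (h ⊗ₜ[k] a)) : k) = Coalgebra.counit h * Coalgebra.counit a
  /-- `h₁ ⊗ (h₂▷a) = h₂ ⊗ (h₁▷a)` -/
  act_cocomm : map LinearMap.id act ∘ₗ (TensorProduct.assoc k H H A).toLinearMap
        ∘ₗ map (Coalgebra.comul : H →ₗ[k] H ⊗[k] H) LinearMap.id
      = map LinearMap.id act ∘ₗ (TensorProduct.assoc k H H A).toLinearMap
        ∘ₗ map ((TensorProduct.comm k H H).toLinearMap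
              ∘ₗ (Coalgebra.comul : H →ₗ[k] H ⊗[k] H)) LinearMap.id
  /-- `d` is multiplicative -/
  d_mul : ∀ a b : A, d (a * b) = d a * d b
  /-- `d(1) = 1` -/
  d_one : d 1 = 1
  /-- `d` is comultiplicative -/
  d_comul : (Coalgebra.comul : H →ₗ[k] H ⊗[k] H) ∘ₗ d
      = map d d ∘ₗ (Coalgebra.comul : A →ₗ[k] A ⊗[k] A)
  /-- `ε∘d = ε` -/
  d_counit : (Coalgebra.counit : H →ₗ[k] k) ∘ₗ d = (Coalgebra.counit : A →ₗ[k] k)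
  /-- `d(h▷a) = h₁ d(a) S(h₂)` -/
  d_act : d ∘ₗ act = LinearMap.mul' k H
      ∘ₗ map LinearMap.id (LinearMap.mul' k H
            ∘ₗ map LinearMap.id (HopfAlgebra.antipode (R := k) : H →ₗ[k] H)
            ∘ₗ (TensorProduct.comm k H H).toLinearMap)
      ∘ₗ (TensorProduct.assoc k H H H).toLinearMap
      ∘ₗ map (Coalgebra.comul : H →ₗ[k] H ⊗[k] H) d
  /-- `d(a)▷b = a₁ b S(a₂)` -/
  crossed : act ∘ₗ map d LinearMap.id = LinearMap.mul' k A
      ∘ₗ map LinearMap.id (LinearMap.mul' k A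
            ∘ₗ map LinearMap.id (HopfAlgebra.antipode (R := k) : A →ₗ[k] A)
            ∘ₗ (TensorProduct.comm k A A).toLinearMap)
      ∘ₗ (TensorProduct.assoc k A A A).toLinearMap
      ∘ₗ map (Coalgebra.comul : A →ₗ[k] A ⊗[k] A) LinearMap.id


section Helpers

open ConvAux HopfAlgebra

@[simp] lemma smap_tmul (x : A) (y : H) :
    smap k A H (x ⊗ₜ[k] y) = Coalgebra.counit (R := k) x • y := by
  simp [smap]

@[simp] lemma tmap_tmul (d : A →ₗ[k] H) (x : A) (y : H) :
    tmap k A H d (x ⊗ₜ[k] y) = d x * y := by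
  simp [tmap]

lemma SS_tmul (d : A →ₗ[k] H) (x : A) (y : H) {ι : Type*} (rx : Coalgebra.Repr k x ι) :
    SS k A H d (x ⊗ₜ[k] y)
    = ∑ i ∈ rx.index, antipode (R := k) (rx.left i) ⊗ₜ[k] (d (rx.right i) * y) := by
  rw [SS]
  simp only [LinearMap.comp_apply, map_tmul, LinearMap.id_apply]
  rw [← rx.eq]
  simp [TensorProduct.sum_tmul, map_sum]

lemma comul1_tmul (x : A) (y : H) {ι κ : Type*} (rx : Coalgebra.Repr k x ι) (ry : Coalgebra.Repr k y κ) :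
    comul1 k A H (x ⊗ₜ[k] y)
    = ∑ i ∈ rx.index, ∑ p ∈ ry.index,
        (rx.left i ⊗ₜ[k] ry.left p) ⊗ₜ[k] (rx.right i ⊗ₜ[k] ry.right p) := by
  rw [comul1]
  simp only [LinearMap.comp_apply, map_tmul, LinearMap.id_apply]
  rw [← rx.eq, ← ry.eq]
  simp only [TensorProduct.sum_tmul, TensorProduct.tmul_sum, map_sum,
    tensorTensorTensorComm_tmul, LinearEquiv.coe_coe]
  rw [Finset.sum_comm]

lemma DL_tmul (d : A →ₗ[k] H) (x : A) (y : H) {ι κ : Type*} (rx : Coalgebra.Repr k x ι)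
    (ry : Coalgebra.Repr k y κ) :
    DLmap k A H d (x ⊗ₜ[k] y)
    = ∑ i ∈ rx.index, ∑ p ∈ ry.index,
        (d (rx.left i) * ry.left p) ⊗ₜ[k] (rx.right i ⊗ₜ[k] ry.right p) := by
  rw [DLmap, LinearMap.comp_apply, comul1_tmul k A H x y rx ry]
  simp [map_sum]

lemma DR_tmul (x : A) (y : H) {ι κ : Type*} (rx : Coalgebra.Repr k x ι) (ry : Coalgebra.Repr k y κ) :
    DRmap k A H (x ⊗ₜ[k] y)
    = ∑ i ∈ rx.index, ∑ p ∈ ry.index,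
        (rx.left i ⊗ₜ[k] ry.left p) ⊗ₜ[k]
          (Coalgebra.counit (R := k) (rx.right i) • ry.right p) := by
  rw [DRmap, LinearMap.comp_apply, comul1_tmul k A H x y rx ry]
  simp [map_sum]

variable {k A H}

/-- Representation of `comul (S x)` coming from anticomultiplicativity. -/
def SRepr {x : A} {ι : Type*} (rx : Coalgebra.Repr k x ι) :
    Coalgebra.Repr k (antipode (R := k) x) ι :=
  ⟨rx.index, fun i => antipode (R := k) (rx.right i),
    fun i => antipode (R := k) (rx.left i), by
    rw [comul_antipode_apply, ← rx.eq]
    simp [map_sum]⟩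

/-- Representation of `comul (x * y)`. -/
def mulRepr {x y : H} {ι κ : Type*} (rx : Coalgebra.Repr k x ι) (ry : Coalgebra.Repr k y κ) :
    Coalgebra.Repr k (x * y) (ι × κ) :=
  ⟨rx.index ×ˢ ry.index, fun q => rx.left q.1 * ry.left q.2,
    fun q => rx.right q.1 * ry.right q.2, by
    rw [show CoalgebraStruct.comul (R := k) (x * y) = Bialgebra.comulAlgHom k H (x * y) from rfl,
      map_mul]
    simp only [Bialgebra.comulAlgHom_apply]
    rw [← rx.eq, ← ry.eq, Finset.sum_mul_sum, Finset.sum_product]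
    simp [Algebra.TensorProduct.tmul_mul_tmul]⟩

end Helpers

section JMaps

open ConvAux HopfAlgebra

/-- `y ↦ 1 ⊗ (y ⊗ 1)` into `H ⊗ (A ⊗ H)`. -/
def jA2 : A →ₗ[k] H ⊗[k] (A ⊗[k] H) :=
  TensorProduct.mk k H (A ⊗[k] H) 1 ∘ₗ (TensorProduct.mk k A H).flip 1

/-- `x ↦ x ⊗ (1 ⊗ 1)` into `H ⊗ (A ⊗ H)`. -/
def jH1 : H →ₗ[k] H ⊗[k] (A ⊗[k] H) :=
  (TensorProduct.mk k H (A ⊗[k] H)).flip ((1 : A) ⊗ₜ[k] (1 : H))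

/-- `z ↦ 1 ⊗ (1 ⊗ z)` into `H ⊗ (A ⊗ H)`. -/
def jH3 : H →ₗ[k] H ⊗[k] (A ⊗[k] H) :=
  TensorProduct.mk k H (A ⊗[k] H) 1 ∘ₗ TensorProduct.mk k A H 1

/-- `y ↦ (y ⊗ 1) ⊗ 1` into `(A ⊗ H) ⊗ H`. -/
def jA1' : A →ₗ[k] (A ⊗[k] H) ⊗[k] H :=
  (TensorProduct.mk k (A ⊗[k] H) H).flip 1 ∘ₗ (TensorProduct.mk k A H).flip 1

/-- `x ↦ (1 ⊗ x) ⊗ 1` into `(A ⊗ H) ⊗ H`. -/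
def jH2' : H →ₗ[k] (A ⊗[k] H) ⊗[k] H :=
  (TensorProduct.mk k (A ⊗[k] H) H).flip 1 ∘ₗ TensorProduct.mk k A H 1

/-- `z ↦ (1 ⊗ 1) ⊗ z` into `(A ⊗ H) ⊗ H`. -/
def jH3' : H →ₗ[k] (A ⊗[k] H) ⊗[k] H :=
  TensorProduct.mk k (A ⊗[k] H) H ((1 : A) ⊗ₜ[k] (1 : H))

@[simp] lemma jA2_apply (y : A) : jA2 k A H y = (1 : H) ⊗ₜ[k] (y ⊗ₜ[k] (1 : H)) := rfl
@[simp] lemma jH1_apply (x : H) : jH1 k A H x = x ⊗ₜ[k] ((1 : A) ⊗ₜ[k] (1 : H)) := rfl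
@[simp] lemma jH3_apply (z : H) : jH3 k A H z = (1 : H) ⊗ₜ[k] ((1 : A) ⊗ₜ[k] z) := rfl
@[simp] lemma jA1'_apply (y : A) : jA1' k A H y = (y ⊗ₜ[k] (1 : H)) ⊗ₜ[k] (1 : H) := rfl
@[simp] lemma jH2'_apply (x : H) : jH2' k A H x = ((1 : A) ⊗ₜ[k] x) ⊗ₜ[k] (1 : H) := rfl
@[simp] lemma jH3'_apply (z : H) : jH3' k A H z = ((1 : A) ⊗ₜ[k] (1 : H)) ⊗ₜ[k] z := rfl

variable {d : A →ₗ[k] H}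

variable {k A H} in
lemma one_B1 : (1 : H ⊗[k] (A ⊗[k] H)) = (1 : H) ⊗ₜ[k] ((1 : A) ⊗ₜ[k] (1 : H)) := rfl

variable {k A H} in
lemma one_B2 : (1 : (A ⊗[k] H) ⊗[k] H) = ((1 : A) ⊗ₜ[k] (1 : H)) ⊗ₜ[k] (1 : H) := rfl

/-- The key collapse: `(Sd)*d = ηε` pushed into the first slot. -/
lemma K1
    (hcomul : (Coalgebra.comul : H →ₗ[k] H ⊗[k] H) ∘ₗ d
      = map d d ∘ₗ (Coalgebra.comul : A →ₗ[k] A ⊗[k] A))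
    (hcounit : (Coalgebra.counit : H →ₗ[k] k) ∘ₗ d = (Coalgebra.counit : A →ₗ[k] k)) :
    conv (jH1 k A H ∘ₗ ((antipode (R := k) : H →ₗ[k] H) ∘ₗ d)) (jH1 k A H ∘ₗ d)
      = convOne := by
  ext a
  rw [conv_apply _ _ (Coalgebra.Repr.arbitrary k a), convOne_apply]
  simp only [LinearMap.comp_apply, jH1_apply, Algebra.TensorProduct.tmul_mul_tmul,
    one_mul, mul_one]
  rw [← TensorProduct.sum_tmul]
  have h1 := sum_antipode_mul_eq_smul (dRepr hcomul a (Coalgebra.Repr.arbitrary k a))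
  simp only [dRepr] at h1
  rw [h1]
  have h2 := LinearMap.congr_fun hcounit a
  simp only [LinearMap.comp_apply] at h2
  rw [h2, one_B1, TensorProduct.smul_tmul']

lemma key1
    (hcomul : (Coalgebra.comul : H →ₗ[k] H ⊗[k] H) ∘ₗ d
      = map d d ∘ₗ (Coalgebra.comul : A →ₗ[k] A ⊗[k] A))
    (hcounit : (Coalgebra.counit : H →ₗ[k] k) ∘ₗ d = (Coalgebra.counit : A →ₗ[k] k)) :
    conv (conv (jA2 k A H ∘ₗ (antipode (R := k) : A →ₗ[k] A))
          (jH1 k A H ∘ₗ ((antipode (R := k) : H →ₗ[k] H) ∘ₗ d)))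
        (conv (jH1 k A H ∘ₗ d) (jH3 k A H ∘ₗ d))
      = conv (jA2 k A H ∘ₗ (antipode (R := k) : A →ₗ[k] A)) (jH3 k A H ∘ₗ d) := by
  rw [conv_assoc, ← conv_assoc (jH1 k A H ∘ₗ ((antipode (R := k) : H →ₗ[k] H) ∘ₗ d))
      (jH1 k A H ∘ₗ d) (jH3 k A H ∘ₗ d),
    K1 k A H hcomul hcounit, conv_one_left]

end JMaps

section MainLemmas

open ConvAux HopfAlgebra Coalgebra

variable {M : Type*} [AddCommMonoid M]

lemma sum_reorder₄ {ι₁ ι₂ ι₃ ι₄ : Type*} (s : Finset ι₁) (t : ι₁ → Finset ι₂)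
    (u : ι₁ → Finset ι₃) (v : Finset ι₄) (f : ι₁ → ι₂ → ι₃ → ι₄ → M) :
    ∑ i ∈ s, ∑ j ∈ t i, ∑ m ∈ u i, ∑ p ∈ v, f i j m p
    = ∑ p ∈ v, ∑ i ∈ s, ∑ j ∈ t i, ∑ m ∈ u i, f i j m p := by
  have h1 : ∀ i, ∑ j ∈ t i, ∑ m ∈ u i, ∑ p ∈ v, f i j m p
      = ∑ p ∈ v, ∑ j ∈ t i, ∑ m ∈ u i, f i j m p := by
    intro i
    calc ∑ j ∈ t i, ∑ m ∈ u i, ∑ p ∈ v, f i j m p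
        = ∑ j ∈ t i, ∑ p ∈ v, ∑ m ∈ u i, f i j m p :=
          Finset.sum_congr rfl fun j _ => Finset.sum_comm
      _ = ∑ p ∈ v, ∑ j ∈ t i, ∑ m ∈ u i, f i j m p := Finset.sum_comm
  calc ∑ i ∈ s, ∑ j ∈ t i, ∑ m ∈ u i, ∑ p ∈ v, f i j m p
      = ∑ i ∈ s, ∑ p ∈ v, ∑ j ∈ t i, ∑ m ∈ u i, f i j m p :=
        Finset.sum_congr rfl fun i _ => h1 i
    _ = ∑ p ∈ v, ∑ i ∈ s, ∑ j ∈ t i, ∑ m ∈ u i, f i j m p := Finset.sum_comm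

lemma sum_reorder₃ {ι₁ ι₃ ι₄ : Type*} (s : Finset ι₁)
    (u : ι₁ → Finset ι₃) (v : Finset ι₄) (f : ι₁ → ι₃ → ι₄ → M) :
    ∑ i ∈ s, ∑ m ∈ u i, ∑ p ∈ v, f i m p
    = ∑ p ∈ v, ∑ i ∈ s, ∑ m ∈ u i, f i m p := by
  calc ∑ i ∈ s, ∑ m ∈ u i, ∑ p ∈ v, f i m p
      = ∑ i ∈ s, ∑ p ∈ v, ∑ m ∈ u i, f i m p :=
        Finset.sum_congr rfl fun i _ => Finset.sum_comm
    _ = ∑ p ∈ v, ∑ i ∈ s, ∑ m ∈ u i, f i m p := Finset.sum_comm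

lemma goal1 (d : A →ₗ[k] H)
    (hmul : ∀ a b : A, d (a * b) = d a * d b) (hone : d 1 = 1)
    (hcomul : (Coalgebra.comul : H →ₗ[k] H ⊗[k] H) ∘ₗ d
      = map d d ∘ₗ (Coalgebra.comul : A →ₗ[k] A ⊗[k] A))
    (hcounit : (Coalgebra.counit : H →ₗ[k] k) ∘ₗ d = (Coalgebra.counit : A →ₗ[k] k)) :
    map (smap k A H) (SS k A H d) ∘ₗ comul1 k A H = DLmap k A H d ∘ₗ SS k A H d := by
  have dS : ∀ x : A, d (antipode (R := k) x) = antipode (R := k) (d x) := by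
    intro x
    have := LinearMap.congr_fun (map_antipode hmul hone hcomul hcounit) x
    simpa using this
  apply TensorProduct.ext'
  intro a h
  set r := Coalgebra.Repr.arbitrary k a with hr
  set rh := Coalgebra.Repr.arbitrary k h with hrh
  set rb : (i : A × A) → Coalgebra.Repr k (r.left i) (A × A) := fun i => Coalgebra.Repr.arbitrary k (r.left i) with hrb
  set rc : (i : A × A) → Coalgebra.Repr k (r.right i) (A × A) := fun i => Coalgebra.Repr.arbitrary k (r.right i) with hrc
  -- left-hand side
  have hL : (map (smap k A H) (SS k A H d) ∘ₗ comul1 k A H) (a ⊗ₜ[k] h)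
      = ∑ p ∈ rh.index, ∑ i ∈ r.index,
          rh.left p ⊗ₜ[k]
            (antipode (R := k) (r.left i) ⊗ₜ[k] (d (r.right i) * rh.right p)) := by
    rw [LinearMap.comp_apply, comul1_tmul k A H a h r rh]
    simp only [map_sum, map_tmul, smap_tmul]
    rw [Finset.sum_comm]
    refine Finset.sum_congr rfl fun p _ => ?_
    have step : ∀ i ∈ r.index,
        (Coalgebra.counit (R := k) (r.left i) • rh.left p) ⊗ₜ[k]
            SS k A H d (r.right i ⊗ₜ[k] rh.right p)
        = Coalgebra.counit (R := k) (r.left i) •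
            ((TensorProduct.mk k H (A ⊗[k] H) (rh.left p) ∘ₗ SS k A H d ∘ₗ
              (TensorProduct.mk k A H).flip (rh.right p)) (r.right i)) := by
      intro i _
      simp [TensorProduct.smul_tmul']
    rw [Finset.sum_congr rfl step, sum_counit_smul r _]
    simp only [LinearMap.comp_apply, LinearMap.flip_apply, TensorProduct.mk_apply]
    rw [SS_tmul k A H d a (rh.right p) r, TensorProduct.tmul_sum]
  -- easy convolution side
  have hE : ∑ p ∈ rh.index,
        (conv (jA2 k A H ∘ₗ (antipode (R := k) : A →ₗ[k] A)) (jH3 k A H ∘ₗ d) a) *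
          (rh.left p ⊗ₜ[k] ((1 : A) ⊗ₜ[k] rh.right p))
      = ∑ p ∈ rh.index, ∑ i ∈ r.index,
          rh.left p ⊗ₜ[k]
            (antipode (R := k) (r.left i) ⊗ₜ[k] (d (r.right i) * rh.right p)) := by
    refine Finset.sum_congr rfl fun p _ => ?_
    rw [conv_apply _ _ r, Finset.sum_mul]
    refine Finset.sum_congr rfl fun i _ => ?_
    simp only [LinearMap.comp_apply, jA2_apply, jH3_apply,
      Algebra.TensorProduct.tmul_mul_tmul, one_mul, mul_one]
  -- hard convolution side
  have hB : ∑ p ∈ rh.index,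
        (conv (conv (jA2 k A H ∘ₗ (antipode (R := k) : A →ₗ[k] A))
            (jH1 k A H ∘ₗ ((antipode (R := k) : H →ₗ[k] H) ∘ₗ d)))
          (conv (jH1 k A H ∘ₗ d) (jH3 k A H ∘ₗ d)) a) *
          (rh.left p ⊗ₜ[k] ((1 : A) ⊗ₜ[k] rh.right p))
      = ∑ p ∈ rh.index, ∑ i ∈ r.index, ∑ j ∈ (rb i).index, ∑ m ∈ (rc i).index,
          (antipode (R := k) (d ((rb i).right j)) * (d ((rc i).left m) * rh.left p)) ⊗ₜ[k]
            (antipode (R := k) ((rb i).left j) ⊗ₜ[k] (d ((rc i).right m) * rh.right p)) := by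
    refine Finset.sum_congr rfl fun p _ => ?_
    rw [conv_apply _ _ r, Finset.sum_mul]
    refine Finset.sum_congr rfl fun i _ => ?_
    rw [conv_apply _ _ (rb i), conv_apply _ _ (rc i), Finset.sum_mul_sum, Finset.sum_mul]
    refine Finset.sum_congr rfl fun j _ => ?_
    rw [Finset.sum_mul]
    refine Finset.sum_congr rfl fun m _ => ?_
    simp only [LinearMap.comp_apply, jA2_apply, jH1_apply, jH3_apply,
      Algebra.TensorProduct.tmul_mul_tmul, one_mul, mul_one, mul_assoc]
  -- right-hand side
  have hR : (DLmap k A H d ∘ₗ SS k A H d) (a ⊗ₜ[k] h)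
      = ∑ p ∈ rh.index, ∑ i ∈ r.index, ∑ j ∈ (rb i).index, ∑ m ∈ (rc i).index,
          (antipode (R := k) (d ((rb i).right j)) * (d ((rc i).left m) * rh.left p)) ⊗ₜ[k]
            (antipode (R := k) ((rb i).left j) ⊗ₜ[k] (d ((rc i).right m) * rh.right p)) := by
    rw [LinearMap.comp_apply, SS_tmul k A H d a h r, map_sum]
    refine Eq.trans (Finset.sum_congr rfl fun i _ => ?_)
      (sum_reorder₄ r.index (fun i => (rb i).index) (fun i => (rc i).index) rh.index _)
    rw [DL_tmul k A H d _ _ (SRepr (rb i)) (mulRepr (dRepr hcomul (r.right i) (rc i)) rh)]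
    simp only [SRepr, mulRepr, dRepr]
    refine Finset.sum_congr rfl fun j _ => ?_
    rw [Finset.sum_product]
    refine Finset.sum_congr rfl fun m _ => ?_
    refine Finset.sum_congr rfl fun p _ => ?_
    rw [dS]
  rw [hL, hR, ← hB, key1 k A H hcomul hcounit]
  exact hE.symm

lemma goal2 (d : A →ₗ[k] H)
    (hcomul : (Coalgebra.comul : H →ₗ[k] H ⊗[k] H) ∘ₗ d
      = map d d ∘ₗ (Coalgebra.comul : A →ₗ[k] A ⊗[k] A)) :
    map (SS k A H d) (tmap k A H d) ∘ₗ comul1 k A H = DRmap k A H ∘ₗ SS k A H d := by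
  apply TensorProduct.ext'
  intro a h
  set r := Coalgebra.Repr.arbitrary k a with hr
  set rh := Coalgebra.Repr.arbitrary k h with hrh
  set rb : (i : A × A) → Coalgebra.Repr k (r.left i) (A × A) :=
    fun i => Coalgebra.Repr.arbitrary k (r.left i) with hrb
  set rc : (i : A × A) → Coalgebra.Repr k (r.right i) (A × A) :=
    fun i => Coalgebra.Repr.arbitrary k (r.right i) with hrc
  -- left-hand side
  have hL : (map (SS k A H d) (tmap k A H d) ∘ₗ comul1 k A H) (a ⊗ₜ[k] h)
      = ∑ p ∈ rh.index, ∑ i ∈ r.index, ∑ j ∈ (rb i).index,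
          (antipode (R := k) ((rb i).left j) ⊗ₜ[k] (d ((rb i).right j) * rh.left p)) ⊗ₜ[k]
            (d (r.right i) * rh.right p) := by
    rw [LinearMap.comp_apply, comul1_tmul k A H a h r rh]
    simp only [map_sum, map_tmul, tmap_tmul]
    rw [Finset.sum_comm]
    refine Finset.sum_congr rfl fun p _ => Finset.sum_congr rfl fun i _ => ?_
    rw [SS_tmul k A H d (r.left i) (rh.left p) (rb i), TensorProduct.sum_tmul]
  -- easy convolution side
  have hE : ∑ p ∈ rh.index,
        (conv (conv (jA1' k A H ∘ₗ (antipode (R := k) : A →ₗ[k] A)) (jH2' k A H ∘ₗ d))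
            (jH3' k A H ∘ₗ d) a) *
          (((1 : A) ⊗ₜ[k] rh.left p) ⊗ₜ[k] rh.right p)
      = ∑ p ∈ rh.index, ∑ i ∈ r.index, ∑ j ∈ (rb i).index,
          (antipode (R := k) ((rb i).left j) ⊗ₜ[k] (d ((rb i).right j) * rh.left p)) ⊗ₜ[k]
            (d (r.right i) * rh.right p) := by
    refine Finset.sum_congr rfl fun p _ => ?_
    rw [conv_apply _ _ r, Finset.sum_mul]
    refine Finset.sum_congr rfl fun i _ => ?_
    rw [conv_apply _ _ (rb i), Finset.sum_mul, Finset.sum_mul]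
    refine Finset.sum_congr rfl fun j _ => ?_
    simp only [LinearMap.comp_apply, jA1'_apply, jH2'_apply, jH3'_apply,
      Algebra.TensorProduct.tmul_mul_tmul, one_mul, mul_one]
  -- hard convolution side
  have hB : ∑ p ∈ rh.index,
        (conv (jA1' k A H ∘ₗ (antipode (R := k) : A →ₗ[k] A))
            (conv (jH2' k A H ∘ₗ d) (jH3' k A H ∘ₗ d)) a) *
          (((1 : A) ⊗ₜ[k] rh.left p) ⊗ₜ[k] rh.right p)
      = ∑ p ∈ rh.index, ∑ i ∈ r.index, ∑ m ∈ (rc i).index,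
          (antipode (R := k) (r.left i) ⊗ₜ[k] (d ((rc i).left m) * rh.left p)) ⊗ₜ[k]
            (d ((rc i).right m) * rh.right p) := by
    refine Finset.sum_congr rfl fun p _ => ?_
    rw [conv_apply _ _ r, Finset.sum_mul]
    refine Finset.sum_congr rfl fun i _ => ?_
    rw [conv_apply _ _ (rc i), Finset.mul_sum, Finset.sum_mul]
    refine Finset.sum_congr rfl fun m _ => ?_
    simp only [LinearMap.comp_apply, jA1'_apply, jH2'_apply, jH3'_apply,
      Algebra.TensorProduct.tmul_mul_tmul, one_mul, mul_one]
  -- right-hand side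
  have hR : (DRmap k A H ∘ₗ SS k A H d) (a ⊗ₜ[k] h)
      = ∑ p ∈ rh.index, ∑ i ∈ r.index, ∑ m ∈ (rc i).index,
          (antipode (R := k) (r.left i) ⊗ₜ[k] (d ((rc i).left m) * rh.left p)) ⊗ₜ[k]
            (d ((rc i).right m) * rh.right p) := by
    rw [LinearMap.comp_apply, SS_tmul k A H d a h r, map_sum]
    refine Eq.trans (Finset.sum_congr rfl fun i _ => ?_)
      (sum_reorder₃ r.index (fun i => (rc i).index) rh.index _)
    rw [DR_tmul k A H _ _ (SRepr (rb i)) (mulRepr (dRepr hcomul (r.right i) (rc i)) rh)]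
    simp only [SRepr, mulRepr, dRepr]
    rw [Finset.sum_comm, Finset.sum_product]
    refine Finset.sum_congr rfl fun m _ => Finset.sum_congr rfl fun p _ => ?_
    have step : ∀ j ∈ (rb i).index,
        (antipode (R := k) ((rb i).right j) ⊗ₜ[k] (d ((rc i).left m) * rh.left p)) ⊗ₜ[k]
            (Coalgebra.counit (R := k) (antipode (R := k) ((rb i).left j)) •
              (d ((rc i).right m) * rh.right p))
        = Coalgebra.counit (R := k) ((rb i).left j) •
            (((TensorProduct.mk k (A ⊗[k] H) H).flip (d ((rc i).right m) * rh.right p) ∘ₗ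
              (TensorProduct.mk k A H).flip (d ((rc i).left m) * rh.left p) ∘ₗ
              (antipode (R := k) : A →ₗ[k] A)) ((rb i).right j)) := by
      intro j _
      rw [ConvAux.counit_antipode]
      simp [TensorProduct.tmul_smul, TensorProduct.smul_tmul']
    rw [Finset.sum_congr rfl step, sum_counit_smul (rb i) _]
    simp
  rw [hL, hR, ← hB, ← conv_assoc]
  exact hE.symm

end MainLemmas

/-- Theorem 2.6 (part): the twisted bicomodule conditions `(s⊗𝒮)Δ = DL∘𝒮` and
`(𝒮⊗t)Δ = DR∘𝒮`. -/
theorem statement7 (act : H ⊗[k] A →ₗ[k] A) (d : A →ₗ[k] H)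
    (hcm : HopfCrossedModule k A H act d) :
    map (smap k A H) (SS k A H d) ∘ₗ comul1 k A H = DLmap k A H d ∘ₗ SS k A H d
    ∧ map (SS k A H d) (tmap k A H d) ∘ₗ comul1 k A H = DRmap k A H ∘ₗ SS k A H d :=
  ⟨goal1 k A H d hcm.d_mul hcm.d_one hcm.d_comul hcm.d_counit, goal2 k A H d hcm.d_comul⟩

end
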